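/- A non-reduced torsion-free abelian group G = R ⊕ D, with D the divisible part and R the reduced part, is a weakly IC-group if and only if R is a weakly IC-group. Moreover, any characteristic subgroup H of G with H ≅ G satisfies H = (H ∩ R) ⊕ D. -/

import Mathlib

namespace Stmt9

variable {D : Type*} [AddCommGroup D]

theorem zsmul_cancel (htfD : ∀ (n : ℤ) (x : D), n • x = 0 → n = 0 ∨ x = 0)
    {n : ℤ} (hn : n ≠ 0) {a b : D} (h : n • a = n • b) : a = b := by
  have := htfD n (a - b) (by rw [smul_sub, h, sub_self])
  rcases this with h' | h'
  · exact absurd h' hn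
  · exact sub_eq_zero.mp h'

theorem den_ne (q : ℚ) : ((q.den : ℤ)) ≠ 0 := by
  exact_mod_cast q.den_nz

theorem num_eq (q : ℚ) : (q.num : ℚ) = q * (q.den : ℚ) := by
  have h : (q.den : ℚ) ≠ 0 := by exact_mod_cast q.den_nz
  have hnd : (q.num : ℚ) / (q.den : ℚ) = q := Rat.num_div_den q
  rw [div_eq_iff h] at hnd
  exact hnd

theorem rat_mul_key (p q : ℚ) :
    ((p.den : ℤ) * q.den) * (p * q).num = ((p * q).den * p.num) * q.num := by
  apply @Int.cast_injective ℚ _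
  push_cast
  rw [num_eq (p*q), num_eq p, num_eq q]
  push_cast
  ring

theorem rat_add_key (p q : ℚ) :
    ((p.den : ℤ) * q.den) * (p + q).num
      = ((p + q).den) * (p.num * q.den + q.num * p.den) := by
  apply @Int.cast_injective ℚ _
  push_cast
  rw [num_eq (p+q), num_eq p, num_eq q]
  push_cast
  ring

noncomputable def qsmul (hDdiv : ∀ n : ℤ, n ≠ 0 → ∀ d : D, ∃ e : D, n • e = d)
    (q : ℚ) (x : D) : D :=
  (hDdiv (q.den : ℤ) (den_ne q) (q.num • x)).choose

theorem qsmul_spec (hDdiv : ∀ n : ℤ, n ≠ 0 → ∀ d : D, ∃ e : D, n • e = d)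
    (q : ℚ) (x : D) : (q.den : ℤ) • qsmul hDdiv q x = q.num • x :=
  (hDdiv (q.den : ℤ) (den_ne q) (q.num • x)).choose_spec

noncomputable def ratModule (htfD : ∀ (n : ℤ) (x : D), n • x = 0 → n = 0 ∨ x = 0)
    (hDdiv : ∀ n : ℤ, n ≠ 0 → ∀ d : D, ∃ e : D, n • e = d) : Module ℚ D where
  smul := qsmul hDdiv
  one_smul x := by
    have h := qsmul_spec hDdiv 1 x
    show qsmul hDdiv 1 x = x; simpa using h
  mul_smul p q x := by
    show qsmul hDdiv (p*q) x = qsmul hDdiv p (qsmul hDdiv q x)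
    apply zsmul_cancel htfD
      (n := ((p*q).den : ℤ) * ((p.den : ℤ) * (q.den : ℤ)))
      (mul_ne_zero (den_ne _) (mul_ne_zero (den_ne _) (den_ne _)))
    have hL : (((p*q).den : ℤ) * ((p.den : ℤ) * (q.den : ℤ))) • qsmul hDdiv (p*q) x
        = (((p.den : ℤ) * q.den) * (p*q).num) • x := by
      rw [mul_comm, mul_smul, qsmul_spec, smul_smul]
    have hR : (((p*q).den : ℤ) * ((p.den : ℤ) * (q.den : ℤ))) • qsmul hDdiv p (qsmul hDdiv q x)
        = ((((p*q).den : ℤ) * p.num) * q.num) • x := by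
      have e1 : (((p*q).den : ℤ) * ((p.den : ℤ) * (q.den : ℤ)))
          = ((((p*q).den : ℤ) * (q.den : ℤ)) * (p.den : ℤ)) := by ring
      rw [e1, mul_smul, qsmul_spec, smul_smul]
      have e2 : ((((p*q).den : ℤ) * (q.den : ℤ)) * p.num)
          = ((((p*q).den : ℤ) * p.num) * (q.den : ℤ)) := by ring
      rw [e2, mul_smul, qsmul_spec, smul_smul]
    rw [hL, hR, rat_mul_key]
  smul_zero q := by
    show qsmul hDdiv q 0 = 0
    apply zsmul_cancel htfD (n := (q.den : ℤ)) (den_ne q)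
    rw [qsmul_spec]; simp
  smul_add q x y := by
    show qsmul hDdiv q (x + y) = qsmul hDdiv q x + qsmul hDdiv q y
    apply zsmul_cancel htfD (n := (q.den : ℤ)) (den_ne q)
    rw [qsmul_spec, smul_add, smul_add, qsmul_spec, qsmul_spec]
  add_smul p q x := by
    show qsmul hDdiv (p+q) x = qsmul hDdiv p x + qsmul hDdiv q x
    apply zsmul_cancel htfD
      (n := (((p+q).den : ℤ)) * ((p.den : ℤ) * (q.den : ℤ)))
      (mul_ne_zero (den_ne _) (mul_ne_zero (den_ne _) (den_ne _)))
    have hL : ((((p+q).den : ℤ)) * ((p.den : ℤ) * (q.den : ℤ))) • qsmul hDdiv (p+q) x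
        = (((p.den : ℤ) * q.den) * (p+q).num) • x := by
      rw [mul_comm, mul_smul, qsmul_spec, smul_smul]
    have hR1 : ((((p+q).den : ℤ)) * ((p.den : ℤ) * (q.den : ℤ))) • qsmul hDdiv p x
        = ((((p+q).den : ℤ) * (q.den : ℤ)) * p.num) • x := by
      have e1 : ((((p+q).den : ℤ)) * ((p.den : ℤ) * (q.den : ℤ)))
          = ((((p+q).den : ℤ) * (q.den : ℤ)) * (p.den : ℤ)) := by ring
      rw [e1, mul_smul, qsmul_spec, smul_smul]
    have hR2 : ((((p+q).den : ℤ)) * ((p.den : ℤ) * (q.den : ℤ))) • qsmul hDdiv q x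
        = ((((p+q).den : ℤ) * (p.den : ℤ)) * q.num) • x := by
      have e1 : ((((p+q).den : ℤ)) * ((p.den : ℤ) * (q.den : ℤ)))
          = ((((p+q).den : ℤ) * (p.den : ℤ)) * (q.den : ℤ)) := by ring
      rw [e1, mul_smul, qsmul_spec, smul_smul]
    rw [smul_add, hL, hR1, hR2, ← add_smul, rat_add_key]
    ring_nf
  zero_smul x := by
    have h := qsmul_spec hDdiv 0 x
    show qsmul hDdiv 0 x = 0; simpa using h

noncomputable def shear [Module ℚ D] (f : D →ₗ[ℚ] ℚ) (c : D) (hfc : f c = 0) : D ≃+ D where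
  toFun v := v + f v • c
  invFun v := v - f v • c
  left_inv v := by
    simp only [map_add, map_smul, hfc, smul_eq_mul, mul_zero, add_zero]
    abel
  right_inv v := by
    simp only [map_sub, map_smul, hfc, smul_eq_mul, mul_zero, sub_zero]
    abel
  map_add' v w := by
    simp only [map_add, add_smul]
    abel

theorem exists_dual_pair [Module ℚ D] {x y : D} (hx : x ∉ Submodule.span ℚ {y}) :
    ∃ f : D →ₗ[ℚ] ℚ, f x = 1 ∧ f y = 0 := by
  set W := Submodule.span ℚ ({y} : Set D) with hW
  have hx0 : W.mkQ x ≠ 0 := by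
    intro h0
    exact hx ((Submodule.Quotient.mk_eq_zero W).mp h0)
  have h1 : ¬ ∀ φ : Module.Dual ℚ (D ⧸ W), φ (W.mkQ x) = 0 := by
    rw [Module.forall_dual_apply_eq_zero_iff]
    exact hx0
  push_neg at h1
  obtain ⟨φ, hφ⟩ := h1
  refine ⟨(φ (W.mkQ x))⁻¹ • (φ.comp W.mkQ), ?_, ?_⟩
  · show (φ (W.mkQ x))⁻¹ • φ (W.mkQ x) = 1
    rw [smul_eq_mul, inv_mul_cancel₀ hφ]
  · have hy : W.mkQ y = 0 :=
      (Submodule.Quotient.mk_eq_zero W).mpr (Submodule.mem_span_singleton_self y)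
    simp [hy]

theorem exists_addEquiv_map (htfD : ∀ (n : ℤ) (x : D), n • x = 0 → n = 0 ∨ x = 0)
    (hDdiv : ∀ n : ℤ, n ≠ 0 → ∀ d : D, ∃ e : D, n • e = d)
    {a b : D} (ha : a ≠ 0) (hb : b ≠ 0) : ∃ ψ : D ≃+ D, ψ a = b := by
  letI := ratModule htfD hDdiv
  by_cases hq : ∃ q : ℚ, b = q • a
  · obtain ⟨q, rfl⟩ := hq
    have hq0 : q ≠ 0 := by rintro rfl; simp at hb
    refine ⟨{ toFun := fun v => q • v, invFun := fun v => q⁻¹ • v,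
              left_inv := ?_, right_inv := ?_, map_add' := ?_ }, rfl⟩
    · intro v; show q⁻¹ • q • v = v; rw [smul_smul, inv_mul_cancel₀ hq0, one_smul]
    · intro v; show q • q⁻¹ • v = v; rw [smul_smul, mul_inv_cancel₀ hq0, one_smul]
    · intro v w; show q • (v + w) = q • v + q • w; rw [smul_add]
  · have hbA : b ∉ Submodule.span ℚ ({a} : Set D) := by
      intro h
      obtain ⟨q, hqq⟩ := Submodule.mem_span_singleton.mp h
      exact hq ⟨q, hqq.symm⟩
    have haB : a ∉ Submodule.span ℚ ({b} : Set D) := by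
      intro h
      obtain ⟨q, hqq⟩ := Submodule.mem_span_singleton.mp h
      have hq0 : q ≠ 0 := by rintro rfl; simp at hqq; exact ha hqq.symm
      exact hq ⟨q⁻¹, by rw [← hqq, smul_smul, inv_mul_cancel₀ hq0, one_smul]⟩
    obtain ⟨f, hf1, hf2⟩ := exists_dual_pair haB
    obtain ⟨g, hg1, hg2⟩ := exists_dual_pair hbA
    refine ⟨(shear f b hf2).trans (shear g (-a) (by rw [map_neg, hg2, neg_zero])), ?_⟩
    show ((a + f a • b) + g (a + f a • b) • (-a)) = b
    rw [hf1, one_smul, map_add, hg2, hg1, zero_add, one_smul]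
    abel

variable {R : Type*} [AddCommGroup R]

/-- Torsion-freeness of the product. -/
theorem htfP (htfR : ∀ (n : ℤ) (x : R), n • x = 0 → n = 0 ∨ x = 0)
    (htfD : ∀ (n : ℤ) (x : D), n • x = 0 → n = 0 ∨ x = 0) :
    ∀ (n : ℤ) (x : R × D), n • x = 0 → n = 0 ∨ x = 0 := by
  intro n x h
  by_cases hn : n = 0
  · exact Or.inl hn
  · right
    have h1 : n • x.1 = 0 := by
      have := congrArg Prod.fst h
      simpa using this
    have h2 : n • x.2 = 0 := by
      have := congrArg Prod.snd h
      simpa using this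
    have e1 := (htfR n x.1 h1).resolve_left hn
    have e2 := (htfD n x.2 h2).resolve_left hn
    exact Prod.ext e1 e2

/-- Key lemma: any element of a subgroup `H` that is divisible within `H`
has trivial first component. -/
theorem kill (htfR : ∀ (n : ℤ) (x : R), n • x = 0 → n = 0 ∨ x = 0)
    (htfD : ∀ (n : ℤ) (x : D), n • x = 0 → n = 0 ∨ x = 0)
    (hRred : ∀ S : AddSubgroup R,
      (∀ n : ℤ, n ≠ 0 → ∀ s ∈ S, ∃ t ∈ S, n • t = s) → S = ⊥)
    (H : AddSubgroup (R × D)) (g : R × D) (hg : g ∈ H)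
    (hdiv : ∀ n : ℤ, n ≠ 0 → ∃ g' ∈ H, n • g' = g) : g.1 = 0 := by
  have tf := htfP htfR htfD
  set Hdiv : AddSubgroup (R × D) :=
    { carrier := {x | x ∈ H ∧ ∀ n : ℤ, n ≠ 0 → ∃ g' ∈ H, n • g' = x}
      zero_mem' := ⟨H.zero_mem, fun n _ => ⟨0, H.zero_mem, smul_zero n⟩⟩
      add_mem' := by
        rintro x y ⟨hxH, hx⟩ ⟨hyH, hy⟩
        refine ⟨H.add_mem hxH hyH, fun n hn => ?_⟩
        obtain ⟨x', hx', hxe⟩ := hx n hn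
        obtain ⟨y', hy', hye⟩ := hy n hn
        exact ⟨x' + y', H.add_mem hx' hy', by rw [smul_add, hxe, hye]⟩
      neg_mem' := by
        rintro x ⟨hxH, hx⟩
        refine ⟨H.neg_mem hxH, fun n hn => ?_⟩
        obtain ⟨x', hx', hxe⟩ := hx n hn
        exact ⟨-x', H.neg_mem hx', by rw [smul_neg, hxe]⟩ } with hHdiv
  have hmem : g ∈ Hdiv := ⟨hg, hdiv⟩
  set S : AddSubgroup R := Hdiv.map (AddMonoidHom.fst R D) with hSdef
  have hS : S = ⊥ := by
    apply hRred
    intro n hn s hs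
    obtain ⟨x, hx, rfl⟩ := hs
    obtain ⟨g', hg', hge⟩ := hx.2 n hn
    have hg'div : g' ∈ Hdiv := by
      refine ⟨hg', fun m hm => ?_⟩
      obtain ⟨g'', hg'', hge''⟩ := hx.2 (n * m) (mul_ne_zero hn hm)
      refine ⟨g'', hg'', ?_⟩
      apply zsmul_cancel tf hn
      rw [smul_smul, hge'', hge]
    refine ⟨g'.1, ⟨g', hg'div, rfl⟩, ?_⟩
    have := congrArg Prod.fst hge
    simpa using this
  have hgS : g.1 ∈ S := ⟨g, hmem, rfl⟩
  rw [hS] at hgS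
  exact hgS

/-- Any element `(0, d)` belongs to every characteristic subgroup `H ≅ R × D`. -/
theorem inr_mem (htfR : ∀ (n : ℤ) (x : R), n • x = 0 → n = 0 ∨ x = 0)
    (htfD : ∀ (n : ℤ) (x : D), n • x = 0 → n = 0 ∨ x = 0)
    (hDdiv : ∀ n : ℤ, n ≠ 0 → ∀ d : D, ∃ e : D, n • e = d)
    (hRred : ∀ S : AddSubgroup R,
      (∀ n : ℤ, n ≠ 0 → ∀ s ∈ S, ∃ t ∈ S, n • t = s) → S = ⊥)
    [Nontrivial D]
    (H : AddSubgroup (R × D))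
    (hchar : ∀ φ : (R × D) ≃+ (R × D), ∀ x ∈ H, φ x ∈ H)
    (e : H ≃+ (R × D)) : ∀ d : D, ((0 : R), d) ∈ H := by
  obtain ⟨d₁, hd₁⟩ := exists_ne (0 : D)
  set h : H := e.symm (0, d₁) with hh
  have hdiv : ∀ n : ℤ, n ≠ 0 → ∃ g' ∈ H, n • g' = (h : R × D) := by
    intro n hn
    obtain ⟨e', he'⟩ := hDdiv n hn d₁
    refine ⟨((e.symm ((0 : R), e') : H) : R × D), (e.symm ((0 : R), e')).2, ?_⟩
    have key : n • (e.symm ((0 : R), e')) = h := by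
      rw [hh, ← map_zsmul]
      congr 1
      rw [Prod.smul_mk, he', smul_zero]
    calc n • ((e.symm ((0 : R), e') : H) : R × D)
        = ((n • (e.symm ((0 : R), e') : H) : H) : R × D) := by
          exact (map_zsmul H.subtype n (e.symm ((0 : R), e'))).symm
      _ = (h : R × D) := by rw [key]
  have h1 : (h : R × D).1 = 0 := kill htfR htfD hRred H _ h.2 hdiv
  have hne : (h : R × D) ≠ 0 := by
    intro h0
    have h00 : h = 0 := Subtype.ext h0
    have h01 : ((0 : R), d₁) = ((0 : R × D) : R × D) := by
      have := congrArg e h00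
      simpa [hh] using this
    exact hd₁ (by simpa using congrArg Prod.snd h01)
  set d₀ := (h : R × D).2 with hd0def
  have hmem0 : ((0 : R), d₀) ∈ H := by
    have heq : ((0 : R), d₀) = (h : R × D) := by
      rw [hd0def, ← h1]
    rw [heq]
    exact h.2
  have hd₀ : d₀ ≠ 0 := by
    intro h0
    apply hne
    have heta : (h : R × D) = ((h : R × D).1, (h : R × D).2) := rfl
    rw [heta, h1, ← hd0def, h0]
    rfl
  intro d
  by_cases hd : d = 0
  · subst hd
    have : (((0 : R), (0 : D)) : R × D) = 0 := rfl
    rw [this]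
    exact H.zero_mem
  · obtain ⟨ψ, hψ⟩ := exists_addEquiv_map htfD hDdiv hd₀ hd
    have hmm := hchar (AddEquiv.prodCongr (AddEquiv.refl R) ψ) _ hmem0
    have happ : (AddEquiv.prodCongr (AddEquiv.refl R) ψ) ((0 : R), d₀) = ((0 : R), d) := by
      rw [← hψ]; rfl
    rw [happ] at hmm
    exact hmm

theorem fst_map_inr_eq_zero
    (htfR : ∀ (n : ℤ) (x : R), n • x = 0 → n = 0 ∨ x = 0)
    (htfD : ∀ (n : ℤ) (x : D), n • x = 0 → n = 0 ∨ x = 0)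
    (hDdiv : ∀ n : ℤ, n ≠ 0 → ∀ d : D, ∃ e : D, n • e = d)
    (hRred : ∀ S : AddSubgroup R,
      (∀ n : ℤ, n ≠ 0 → ∀ s ∈ S, ∃ t ∈ S, n • t = s) → S = ⊥)
    (φ : (R × D) →+ (R × D)) (d : D) : (φ ((0 : R), d)).1 = 0 := by
  apply kill htfR htfD hRred ⊤ _ trivial
  intro n hn
  obtain ⟨e', he'⟩ := hDdiv n hn d
  refine ⟨φ ((0 : R), e'), trivial, ?_⟩
  rw [← map_zsmul, Prod.smul_mk, smul_zero, he']

theorem fst_e_inr_eq_zero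
    (htfR : ∀ (n : ℤ) (x : R), n • x = 0 → n = 0 ∨ x = 0)
    (htfD : ∀ (n : ℤ) (x : D), n • x = 0 → n = 0 ∨ x = 0)
    (hDdiv : ∀ n : ℤ, n ≠ 0 → ∀ d : D, ∃ e : D, n • e = d)
    (hRred : ∀ S : AddSubgroup R,
      (∀ n : ℤ, n ≠ 0 → ∀ s ∈ S, ∃ t ∈ S, n • t = s) → S = ⊥)
    (H : AddSubgroup (R × D)) (hinr : ∀ d : D, ((0 : R), d) ∈ H)
    (e : H ≃+ (R × D)) (d : D) :
    ((e ⟨((0 : R), d), hinr d⟩ : R × D)).1 = 0 := by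
  apply kill htfR htfD hRred ⊤ _ trivial
  intro n hn
  obtain ⟨e', he'⟩ := hDdiv n hn d
  refine ⟨e ⟨((0 : R), e'), hinr e'⟩, trivial, ?_⟩
  have harg : (n • (⟨((0 : R), e'), hinr e'⟩ : H)) = (⟨((0 : R), d), hinr d⟩ : H) := by
    apply Subtype.ext
    have h2 : ((n • (⟨((0 : R), e'), hinr e'⟩ : H) : H) : R × D)
        = n • (((0 : R), e') : R × D) := map_zsmul H.subtype n _
    rw [h2, Prod.smul_mk, smul_zero, he']
  rw [← map_zsmul e n _, harg]

theorem exists_induced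
    (htfR : ∀ (n : ℤ) (x : R), n • x = 0 → n = 0 ∨ x = 0)
    (htfD : ∀ (n : ℤ) (x : D), n • x = 0 → n = 0 ∨ x = 0)
    (hDdiv : ∀ n : ℤ, n ≠ 0 → ∀ d : D, ∃ e : D, n • e = d)
    (hRred : ∀ S : AddSubgroup R,
      (∀ n : ℤ, n ≠ 0 → ∀ s ∈ S, ∃ t ∈ S, n • t = s) → S = ⊥)
    (φ : (R × D) ≃+ (R × D)) :
    ∃ α : R ≃+ R, ∀ (r : R) (d : D), (φ (r, d)).1 = α r := by
  have z1 : ∀ d : D, (φ ((0 : R), d)).1 = 0 :=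
    fun d => fst_map_inr_eq_zero htfR htfD hDdiv hRred φ.toAddMonoidHom d
  have z2 : ∀ d : D, (φ.symm ((0 : R), d)).1 = 0 :=
    fun d => fst_map_inr_eq_zero htfR htfD hDdiv hRred φ.symm.toAddMonoidHom d
  have hβα : ∀ r : R, (φ.symm (((φ (r, 0)).1 : R), 0)).1 = r := by
    intro r
    have key : (((φ (r, 0)).1 : R), (0 : D)) = φ (r, 0) - ((0 : R), (φ (r, 0)).2) := by
      apply Prod.ext <;> simp
    rw [key, map_sub, AddEquiv.symm_apply_apply]
    simp [z2]
  have hαβ : ∀ r : R, (φ (((φ.symm (r, 0)).1 : R), 0)).1 = r := by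
    intro r
    have key : (((φ.symm (r, 0)).1 : R), (0 : D)) = φ.symm (r, 0) - ((0 : R), (φ.symm (r, 0)).2) := by
      apply Prod.ext <;> simp
    rw [key, map_sub, AddEquiv.apply_symm_apply]
    simp [z1]
  refine ⟨{ toFun := fun r => (φ (r, 0)).1,
            invFun := fun r => (φ.symm (r, 0)).1,
            left_inv := hβα, right_inv := hαβ,
            map_add' := ?_ }, ?_⟩
  · intro r s
    show (φ ((r + s : R), (0 : D))).1 = (φ (r, 0)).1 + (φ (s, 0)).1
    have : ((r + s : R), (0 : D)) = ((r : R), (0 : D)) + ((s : R), (0 : D)) := by simp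
    rw [this, map_add]
    rfl
  · intro r d
    have : ((r : R), d) = ((r : R), (0 : D)) + ((0 : R), d) := by simp
    rw [this, map_add]
    show (φ (r, 0)).1 + (φ ((0 : R), d)).1 = _
    rw [z1 d, add_zero]
    rfl

end Stmt9

/-- For a non-reduced torsion-free abelian group `G = R ⊕ D` (with `D ≠ 0`
divisible and `R` reduced), `G` is a weakly IC-group iff `R` is; moreover every
characteristic subgroup `H` of `G` with `H ≅ G` satisfies `H = (H ∩ R) ⊕ D`. -/
theorem stmt9 {R D : Type*} [AddCommGroup R] [AddCommGroup D] [Nontrivial D]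
    (htfR : ∀ (n : ℤ) (x : R), n • x = 0 → n = 0 ∨ x = 0)
    (htfD : ∀ (n : ℤ) (x : D), n • x = 0 → n = 0 ∨ x = 0)
    (hDdiv : ∀ n : ℤ, n ≠ 0 → ∀ d : D, ∃ e : D, n • e = d)
    (hRred : ∀ S : AddSubgroup R,
      (∀ n : ℤ, n ≠ 0 → ∀ s ∈ S, ∃ t ∈ S, n • t = s) → S = ⊥) :
    ((∃ H : AddSubgroup (R × D),
        (∀ φ : (R × D) ≃+ (R × D), ∀ x ∈ H, φ x ∈ H) ∧ H ≠ ⊤ ∧ Nonempty (H ≃+ (R × D))) ↔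
      (∃ K : AddSubgroup R,
        (∀ α : R ≃+ R, ∀ x ∈ K, α x ∈ K) ∧ K ≠ ⊤ ∧ Nonempty (K ≃+ R))) ∧
    (∀ H : AddSubgroup (R × D),
      (∀ φ : (R × D) ≃+ (R × D), ∀ x ∈ H, φ x ∈ H) → Nonempty (H ≃+ (R × D)) →
      H = (H ⊓ (AddMonoidHom.inl R D).range) ⊔ (AddMonoidHom.inr R D).range) := by
  constructor
  · constructor
    · rintro ⟨H, hchar, hHne, ⟨e⟩⟩
      have hinr := Stmt9.inr_mem htfR htfD hDdiv hRred H hchar e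
      set K : AddSubgroup R := H.comap (AddMonoidHom.inl R D) with hK
      have hmemK : ∀ r : R, r ∈ K ↔ ((r : R), (0 : D)) ∈ H := by
        intro r
        rw [hK, AddSubgroup.mem_comap]
        rfl
      refine ⟨K, ?_, ?_, ?_⟩
      · intro α r hr
        rw [hmemK] at hr ⊢
        have hmm := hchar (AddEquiv.prodCongr α (AddEquiv.refl D)) _ hr
        have happ : (AddEquiv.prodCongr α (AddEquiv.refl D)) ((r : R), (0 : D))
            = ((α r : R), (0 : D)) := rfl
        rw [happ] at hmm
        exact hmm
      · intro hKtop
        apply hHne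
        rw [AddSubgroup.eq_top_iff']
        intro x
        have h1 : ((x.1 : R), (0 : D)) ∈ H := by
          rw [← hmemK, hKtop]
          trivial
        have h2 := hinr x.2
        have hx : x = ((x.1, (0 : D)) : R × D) + ((0 : R), x.2) := by simp
        rw [hx]
        exact H.add_mem h1 h2
      · -- construct the isomorphism K ≃+ R
        have hjmem : ∀ k : K, ((k : R), (0 : D)) ∈ H := fun k => (hmemK _).mp k.2
        let j : K →+ H :=
          { toFun := fun k => ⟨((k : R), (0 : D)), hjmem k⟩
            map_zero' := by apply Subtype.ext; simp
            map_add' := by intro k l; apply Subtype.ext; simp }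
        let f : K →+ R := (AddMonoidHom.fst R D).comp (e.toAddMonoidHom.comp j)
        have hfval : ∀ k : K, f k = (e (j k)).1 := fun k => rfl
        have finj : Function.Injective f := by
          rw [injective_iff_map_eq_zero]
          intro k hk0
          set x := e (j k) with hx
          have hx1 : x.1 = 0 := hk0
          have hdivjk : ∀ n : ℤ, n ≠ 0 → ∃ g' ∈ H, n • g' = ((j k : H) : R × D) := by
            intro n hn
            obtain ⟨e', he'⟩ := hDdiv n hn x.2
            refine ⟨((e.symm ((0 : R), e') : H) : R × D), (e.symm ((0 : R), e')).2, ?_⟩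
            have key : n • (e.symm ((0 : R), e')) = j k := by
              have h4 : n • (((0 : R), e') : R × D) = ((0 : R), x.2) := by
                rw [Prod.smul_mk, smul_zero, he']
              rw [← map_zsmul e.symm, h4]
              have h5 : (((0 : R), x.2) : R × D) = x := by
                rw [← hx1]
              rw [h5, hx, AddEquiv.symm_apply_apply]
            calc n • ((e.symm ((0 : R), e') : H) : R × D)
                = ((n • (e.symm ((0 : R), e') : H) : H) : R × D) :=
                  (map_zsmul H.subtype n _).symm
              _ = ((j k : H) : R × D) := by rw [key]
          have hfst := Stmt9.kill htfR htfD hRred H _ (j k).2 hdivjk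
          exact Subtype.ext hfst
        have fsurj : Function.Surjective f := by
          intro r
          set h0 : H := e.symm ((r : R), (0 : D)) with hh0
          set d : D := ((h0 : R × D)).2 with hd
          have hmem1 : (((h0 : R × D).1 : R), (0 : D)) ∈ H := by
            have heq : (((h0 : R × D).1 : R), (0 : D)) = (h0 : R × D) - ((0 : R), d) := by
              apply Prod.ext <;> simp [hd]
            rw [heq]
            exact H.sub_mem h0.2 (hinr d)
          refine ⟨⟨(h0 : R × D).1, (hmemK _).mpr hmem1⟩, ?_⟩
          have hjeq : j ⟨(h0 : R × D).1, (hmemK _).mpr hmem1⟩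
              = h0 - ⟨((0 : R), d), hinr d⟩ := by
            apply Subtype.ext
            have hco : ((h0 - ⟨((0 : R), d), hinr d⟩ : H) : R × D)
                = (h0 : R × D) - ((0 : R), d) := rfl
            have hjco : ((j ⟨(h0 : R × D).1, (hmemK _).mpr hmem1⟩ : H) : R × D)
                = (((h0 : R × D).1 : R), (0 : D)) := rfl
            rw [hco, hjco]
            apply Prod.ext <;> simp [hd]
          rw [hfval, hjeq, map_sub]
          have hz := Stmt9.fst_e_inr_eq_zero htfR htfD hDdiv hRred H hinr e d
          have h6 : e h0 = ((r : R), (0 : D)) := by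
            rw [hh0, AddEquiv.apply_symm_apply]
          rw [Prod.fst_sub, h6, hz]
          simp
        exact ⟨AddEquiv.ofBijective f ⟨finj, fsurj⟩⟩
    · rintro ⟨K, hcharK, hKne, ⟨eK⟩⟩
      refine ⟨K.prod ⊤, ?_, ?_, ?_⟩
      · intro φ x hx
        obtain ⟨α, hα⟩ := Stmt9.exists_induced htfR htfD hDdiv hRred φ
        rw [AddSubgroup.mem_prod] at hx ⊢
        refine ⟨?_, trivial⟩
        have h7 : (φ x).1 = α x.1 := by
          calc (φ x).1 = (φ (x.1, x.2)).1 := by rw [Prod.mk.eta]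
            _ = α x.1 := hα _ _
        rw [h7]
        exact hcharK α _ hx.1
      · intro htop
        obtain ⟨r, hr⟩ : ∃ r : R, r ∉ K := by
          by_contra hc
          push_neg at hc
          exact hKne ((AddSubgroup.eq_top_iff' K).mpr hc)
        apply hr
        have : ((r : R), (0 : D)) ∈ K.prod ⊤ := by rw [htop]; trivial
        exact (AddSubgroup.mem_prod.mp this).1
      · exact ⟨(AddSubgroup.prodEquiv K ⊤).trans
          (AddEquiv.prodCongr eK AddSubgroup.topEquiv)⟩
  · rintro H hchar ⟨e⟩
    have hinr := Stmt9.inr_mem htfR htfD hDdiv hRred H hchar e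
    apply le_antisymm
    · intro x hx
      have h1 : ((0 : R), x.2) ∈ H := hinr x.2
      have h2 : ((x.1 : R), (0 : D)) ∈ H := by
        have heq : ((x.1 : R), (0 : D)) = x - ((0 : R), x.2) := by
          apply Prod.ext <;> simp
        rw [heq]
        exact H.sub_mem hx h1
      have hx2 : x = ((x.1, (0 : D)) : R × D) + ((0 : R), x.2) := by simp
      rw [hx2]
      exact AddSubgroup.add_mem _
        (AddSubgroup.mem_sup_left ⟨h2, ⟨x.1, rfl⟩⟩)
        (AddSubgroup.mem_sup_right ⟨x.2, rfl⟩)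
    · apply sup_le
      · exact inf_le_left
      · rintro x ⟨d, rfl⟩
        exact hinr d
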